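/- Let L be an n × N matrix over F, and let X_A, B, E be pairwise disjoint subsets of {1,…,n} with X_A ∪ B ∪ E = {1,…,n} and B nonempty. Suppose that for every u ∈ F^n with u ⊲ X_A and every family (α_i)_{i∈B} of elements of F, not all zero, the vector u + Σ_{i∈B} α_i e_i does not lie in C(L). Then: (1) for every i ∈ B, the row L_i of L lies in the span of the rows {L_j : j ∈ E}; and (2) for every w ∈ F^B the linear system y L_E = w L_B has at least one solution y ∈ F^E, where L_E and L_B denote the submatrices of L formed by the rows indexed by E and by B, respectively. -/

import Mathlib

/-- If no vector `u + Σ_{i∈B} α_i e_i` (with `u ⊲ X_A`, the `α_i` not all zero)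
lies in `C(L)`, then (1) every row `L_i`, `i ∈ B`, lies in the span of the rows indexed by `E`,
and (2) the system `y L_E = w L_B` is solvable for every `w`. -/
theorem stmt_1 {F : Type} [Field F] {n N : ℕ}
    (L : Matrix (Fin n) (Fin N) F)
    (XA B E : Set (Fin n))
    (hAB : Disjoint XA B) (hAE : Disjoint XA E) (hBE : Disjoint B E)
    (hcover : XA ∪ B ∪ E = Set.univ) (hBne : B.Nonempty)
    (hsec : ∀ u : Fin n → F, (∀ j, u j ≠ 0 → j ∈ XA) →
      ∀ α : Fin n → F, (∀ j, α j ≠ 0 → j ∈ B) → α ≠ 0 →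
        u + α ∉ Submodule.span F (Set.range fun c : Fin N => fun r : Fin n => L r c)) :
    (∀ i ∈ B, L i ∈ Submodule.span F ((fun r : Fin n => L r) '' E)) ∧
    (∀ w : Fin n → F, (∀ j, w j ≠ 0 → j ∈ B) →
      ∃ y : Fin n → F, (∀ j, y j ≠ 0 → j ∈ E) ∧
        Matrix.vecMul y L = Matrix.vecMul w L) := by
  classical
  have main : ∀ w : Fin n → F, (∀ j, w j ≠ 0 → j ∈ B) →
      ∃ y : Fin n → F, (∀ j, y j ≠ 0 → j ∈ E) ∧
        Matrix.vecMul y L = Matrix.vecMul w L := by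
    intro w hw
    by_contra hcon
    push_neg at hcon
    -- the linear map sending y to (y restricted to E) ᵥ* L
    set φ : (Fin n → F) →ₗ[F] (Fin N → F) :=
      { toFun := fun y => Matrix.vecMul (fun j => if j ∈ E then y j else 0) L
        map_add' := by
          intro a b
          have : (fun j => if j ∈ E then (a + b) j else 0) =
              (fun j => if j ∈ E then a j else 0) + (fun j => if j ∈ E then b j else 0) := by
            funext j; by_cases h : j ∈ E <;> simp [h]
          show Matrix.vecMul _ L = Matrix.vecMul _ L + Matrix.vecMul _ L
          rw [this, Matrix.add_vecMul]
        map_smul' := by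
          intro c a
          have : (fun j => if j ∈ E then (c • a) j else 0) =
              c • (fun j => if j ∈ E then a j else 0) := by
            funext j; by_cases h : j ∈ E <;> simp [h]
          show Matrix.vecMul _ L = _ • Matrix.vecMul _ L
          rw [this, Matrix.smul_vecMul]; rfl } with hφdef
    have hnot : Matrix.vecMul w L ∉ LinearMap.range φ := by
      rintro ⟨y, hy⟩
      refine hcon (fun j => if j ∈ E then y j else 0) ?_ hy
      intro j hj
      by_contra hjE
      simp [hjE] at hj
    obtain ⟨f, hf1, hf2⟩ := Submodule.exists_dual_map_eq_bot_of_notMem hnot inferInstance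
    have hker : ∀ y : Fin n → F, f (φ y) = 0 := by
      intro y
      have : f (φ y) ∈ (LinearMap.range φ).map f :=
        Submodule.mem_map_of_mem (LinearMap.mem_range_self φ y)
      rw [hf2] at this
      exact (Submodule.mem_bot F).mp this
    -- represent f by a vector z
    set z : Fin N → F := fun c => f (fun d => if c = d then 1 else 0) with hz
    have hfrep : ∀ a : Fin N → F, f a = dotProduct a z := by
      intro a
      rw [LinearMap.pi_apply_eq_sum_univ f a]
      simp [dotProduct, hz, smul_eq_mul]
    set v : Fin n → F := Matrix.mulVec L z with hv
    have hdot : ∀ y : Fin n → F, f (Matrix.vecMul y L) = dotProduct y v := by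
      intro y
      rw [hfrep, hv, ← Matrix.dotProduct_mulVec]
    -- v vanishes on E
    have hvE : ∀ j ∈ E, v j = 0 := by
      intro j hj
      set e : Fin n → F := fun i => if i = j then (1 : F) else 0 with he
      have harg : (fun i => if i ∈ E then e i else 0) = e := by
        funext i
        by_cases hij : i = j
        · subst hij; simp [he, hj]
        · simp [he, hij]
      have h1 : f (φ e) = 0 := hker _
      have h3 : φ e = Matrix.vecMul e L := by
        show Matrix.vecMul _ L = _
        rw [harg]
      rw [h3, hdot] at h1
      simpa [dotProduct, he, ite_mul] using h1
    have hwv : dotProduct w v ≠ 0 := by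
      rw [← hdot]; exact hf1
    -- v lies in the column span
    have hvmem : v ∈ Submodule.span F (Set.range fun c : Fin N => fun r : Fin n => L r c) := by
      have : v = ∑ c : Fin N, z c • (fun r : Fin n => L r c) := by
        funext r
        simp [hv, Matrix.mulVec, dotProduct, Finset.sum_apply, mul_comm]
      rw [this]
      exact Submodule.sum_mem _ fun c _ =>
        Submodule.smul_mem _ _ (Submodule.subset_span ⟨c, rfl⟩)
    -- decompose v = u + α and contradict hsec
    set u : Fin n → F := fun j => if j ∈ XA then v j else 0 with hu
    set α : Fin n → F := fun j => if j ∈ B then v j else 0 with hα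
    have hsum : u + α = v := by
      funext j
      have hj : j ∈ XA ∪ B ∪ E := by rw [hcover]; trivial
      rcases hj with hj | hj
      · rcases hj with hj | hj
        · have : j ∉ B := fun h => Set.disjoint_left.mp hAB hj h
          simp [hu, hα, hj, this]
        · have : j ∉ XA := fun h => Set.disjoint_left.mp hAB h hj
          simp [hu, hα, hj, this]
      · have h1 : j ∉ XA := fun h => Set.disjoint_left.mp hAE h hj
        have h2 : j ∉ B := fun h => Set.disjoint_left.mp hBE h hj
        simp [hu, hα, h1, h2, hvE j hj]
    have hαne : α ≠ 0 := by
      obtain ⟨j, hj⟩ : ∃ j, w j * v j ≠ 0 := by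
        by_contra h
        push_neg at h
        exact hwv (by simpa [dotProduct] using Finset.sum_eq_zero fun j _ => h j)
      have hwj : w j ≠ 0 := fun h => hj (by simp [h])
      have hvj : v j ≠ 0 := fun h => hj (by simp [h])
      have hjB : j ∈ B := hw j hwj
      intro h
      have : α j = 0 := by rw [h]; rfl
      rw [hα] at this
      simp [hjB] at this
      exact hvj this
    exact hsec u (fun j hj => by by_contra h; simp [hu, h] at hj) α
      (fun j hj => by by_contra h; simp [hα, h] at hj) hαne (hsum ▸ hvmem)
  refine ⟨?_, main⟩
  intro i hi
  obtain ⟨y, hyE, hyL⟩ := main (Pi.single i 1) (by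
    intro j hj
    by_contra h
    have : j ≠ i := by rintro rfl; exact h hi
    simp [Pi.single_eq_of_ne this] at hj)
  rw [Matrix.single_one_vecMul] at hyL
  rw [show L i = Matrix.vecMul y L from hyL.symm]
  have : Matrix.vecMul y L = ∑ j : Fin n, y j • L j := by
    funext c
    simp [Matrix.vecMul, dotProduct, Finset.sum_apply]
  rw [this]
  refine Submodule.sum_mem _ fun j _ => ?_
  by_cases hj : y j = 0
  · simp [hj]
  · exact Submodule.smul_mem _ _ (Submodule.subset_span ⟨j, hyE j hj, rfl⟩)
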